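/- Every finite simple loopless digraph G satisfies γ*(G) ≤ 2·α(G), where γ*(G) is the fractional domination number and α(G) is the independence number of the underlying undirected graph. Equivalently, there exists a fractional dominating function g : V → [0,1] with ∑_{v∈V} g(v) ≤ 2·α(G). -/

import Mathlib

open Finset
open scoped Classical

lemma greedy_indep {V : Type*} [Fintype V] (E : V → V → Prop)
    (hirr : Irreflexive E) (hsimple : ∀ u v, E u v → ¬ E v u)
    (q : V → ℝ) (hq : ∀ x, 0 ≤ q x) (T : Finset V) :
    ∃ S : Finset V, S ⊆ T ∧ (∀ u ∈ S, ∀ w ∈ S, u ≠ w → ¬ E u w) ∧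
      ∑ x ∈ T, q x ≤ ∑ s ∈ S, 2 * (q s + ∑ x ∈ univ.filter (fun x => E s x), q x) := by
  induction T using Finset.strongInduction with
  | _ T IH =>
  by_cases h0 : ∀ x ∈ T, q x = 0
  · exact ⟨∅, empty_subset _, by simp, by rw [Finset.sum_eq_zero h0]; simp⟩
  · push_neg at h0
    obtain ⟨x0, hx0T, hx0⟩ := h0
    have hx0pos : 0 < q x0 := lt_of_le_of_ne (hq x0) (Ne.symm hx0)
    -- find v ∈ T with in-mass ≤ out-mass
    have hkey : ∃ v ∈ T, (∑ x ∈ T.filter (fun x => E x v), q x)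
        ≤ (∑ x ∈ T.filter (fun x => E v x), q x) := by
      by_contra hc
      push_neg at hc
      have hdouble : ∑ v ∈ T, q v * ∑ x ∈ T.filter (fun x => E x v), q x
          = ∑ v ∈ T, q v * ∑ x ∈ T.filter (fun x => E v x), q x := by
        simp only [Finset.mul_sum, Finset.sum_filter]
        rw [Finset.sum_comm]
        congr 1; ext v; congr 1; ext x
        by_cases h : E v x <;> simp [h, mul_comm]
      have hlt : ∑ v ∈ T, q v * ∑ x ∈ T.filter (fun x => E v x), q x
          < ∑ v ∈ T, q v * ∑ x ∈ T.filter (fun x => E x v), q x := by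
        apply Finset.sum_lt_sum
        · intro i hi
          exact mul_le_mul_of_nonneg_left (le_of_lt (hc i hi)) (hq i)
        · exact ⟨x0, hx0T, by
            exact mul_lt_mul_of_pos_left (hc x0 hx0T) hx0pos⟩
      exact absurd hdouble (ne_of_gt hlt)
    obtain ⟨v, hvT, hv⟩ := hkey
    set P : V → Prop := fun x => x = v ∨ E v x ∨ E x v with hP
    have hT'ss : T.filter (fun x => ¬ P x) ⊂ T :=
      Finset.filter_ssubset.2 ⟨v, hvT, by simp [hP]⟩
    obtain ⟨S', hS'sub, hS'ind, hS'sum⟩ := IH _ hT'ss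
    have hvS' : v ∉ S' := fun h => (Finset.mem_filter.1 (hS'sub h)).2 (Or.inl rfl)
    refine ⟨insert v S', ?_, ?_, ?_⟩
    · exact Finset.insert_subset hvT ((hS'sub.trans (Finset.filter_subset _ _)))
    · intro u hu w hw huw
      rcases Finset.mem_insert.1 hu with hu1 | hu2
      · rcases Finset.mem_insert.1 hw with hw1 | hw2
        · exact absurd (hu1.trans hw1.symm) huw
        · have h := (Finset.mem_filter.1 (hS'sub hw2)).2
          simp only [hP, not_or] at h
          subst hu1
          exact fun he => h.2.1 he
      · rcases Finset.mem_insert.1 hw with hw1 | hw2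
        · have h := (Finset.mem_filter.1 (hS'sub hu2)).2
          simp only [hP, not_or] at h
          subst hw1
          exact fun he => h.2.2 he
        · exact hS'ind u hu2 w hw2 huw
    · rw [Finset.sum_insert hvS']
      have hsplit : ∑ x ∈ T, q x
          = ∑ x ∈ T.filter P, q x + ∑ x ∈ T.filter (fun x => ¬ P x), q x :=
        (Finset.sum_filter_add_sum_filter_not T P q).symm
      have hunion : T.filter P
          = T.filter (fun x => x = v) ∪ (T.filter (fun x => E v x) ∪ T.filter (fun x => E x v)) := by
        simp only [hP, Finset.filter_or]
      have hd1 : Disjoint (T.filter (fun x => E v x)) (T.filter (fun x => E x v)) := by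
        rw [Finset.disjoint_left]
        intro x hx hx'
        exact hsimple v x (Finset.mem_filter.1 hx).2 (Finset.mem_filter.1 hx').2
      have hd2 : Disjoint (T.filter (fun x => x = v))
          ((T.filter (fun x => E v x) ∪ T.filter (fun x => E x v))) := by
        rw [Finset.disjoint_left]
        rintro x hx hx'
        have hxv : x = v := (Finset.mem_filter.1 hx).2
        rcases Finset.mem_union.1 hx' with h | h
        · exact hirr v (hxv ▸ (Finset.mem_filter.1 h).2)
        · exact hirr v (hxv ▸ (Finset.mem_filter.1 h).2)
      have hsum1 : ∑ x ∈ T.filter (fun x => x = v), q x = q v := by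
        rw [Finset.sum_filter, Finset.sum_ite_eq' T v q]
        simp [hvT]
      have hsub2 : ∑ x ∈ T.filter (fun x => E v x), q x
          ≤ ∑ x ∈ univ.filter (fun x => E v x), q x := by
        apply Finset.sum_le_sum_of_subset_of_nonneg
        · exact Finset.filter_subset_filter _ (Finset.subset_univ T)
        · intro i _ _; exact hq i
      have hPsum : ∑ x ∈ T.filter P, q x
          = q v + (∑ x ∈ T.filter (fun x => E v x), q x + ∑ x ∈ T.filter (fun x => E x v), q x) := by
        rw [hunion, Finset.sum_union hd2, Finset.sum_union hd1, hsum1]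
      have : ∑ x ∈ T.filter P, q x ≤ 2 * (q v + ∑ x ∈ univ.filter (fun x => E v x), q x) := by
        rw [hPsum]
        have := hq v
        linarith
      linarith [hS'sum, hsplit, this]


noncomputable def Amap {V : Type*} [Fintype V] (E : V → V → Prop) (c : ℝ) :
    (V → ℝ) →ₗ[ℝ] (V → ℝ) :=
  LinearMap.pi fun v =>
    (LinearMap.proj v + ∑ x ∈ univ.filter (fun x => E x v), LinearMap.proj x)
      - c • (∑ x : V, LinearMap.proj x)

lemma Amap_apply {V : Type*} [Fintype V] (E : V → V → Prop) (c : ℝ) (p : V → ℝ) (v : V) :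
    Amap E c p v = p v + (∑ x ∈ univ.filter (fun x => E x v), p x) - c * ∑ x : V, p x := by
  simp only [Amap, LinearMap.pi_apply, LinearMap.sub_apply, LinearMap.add_apply,
    LinearMap.smul_apply, LinearMap.proj_apply, LinearMap.coe_sum, Finset.sum_apply,
    smul_eq_mul]

lemma exists_p {V : Type*} [Fintype V] [Nonempty V] (E : V → V → Prop)
    (hirr : Irreflexive E) (hsimple : ∀ u v, E u v → ¬ E v u)
    (a : ℕ) (ha0 : 0 < a)
    (hub : ∀ S : Finset V, (∀ u ∈ S, ∀ w ∈ S, u ≠ w → ¬ E u w) → S.card ≤ a) :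
    ∃ p : V → ℝ, (∀ x, 0 ≤ p x) ∧ (∑ x : V, p x = 1) ∧
      ∀ v, 1 / (2 * a) ≤ p v + ∑ x ∈ univ.filter (fun x => E x v), p x := by
  set c : ℝ := 1 / (2 * a) with hc
  have hcpos : 0 < c := by positivity
  by_contra hK
  push_neg at hK
  -- separation
  set K : Set (V → ℝ) := (Amap E c) '' (stdSimplex ℝ V) with hKdef
  set Ω : Set (V → ℝ) := Set.univ.pi (fun _ : V => Set.Ici (0:ℝ)) with hΩdef
  have hdisj : Disjoint K Ω := by
    rw [Set.disjoint_left]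
    rintro y ⟨p, hp, rfl⟩ hyΩ
    obtain ⟨v, hv⟩ := hK p (fun x => hp.1 x) hp.2
    have h0 : 0 ≤ Amap E c p v := hyΩ v (Set.mem_univ v)
    rw [Amap_apply, hp.2, mul_one] at h0
    linarith
  obtain ⟨f, u, w, hfu, huw, hfw⟩ :=
    geometric_hahn_banach_compact_closed
      ((convex_stdSimplex ℝ V).linear_image (Amap E c))
      ((isCompact_stdSimplex ℝ V).image (Amap E c).continuous_on_pi)
      (convex_pi (fun i _ => convex_Ici 0))
      (isClosed_set_pi (fun i _ => isClosed_Ici))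
      hdisj
  have h0mem : (0 : V → ℝ) ∈ Ω := by
    rw [hΩdef, Set.mem_univ_pi]
    intro i
    exact Set.mem_Ici.2 (le_refl 0)
  have hw0 : w < 0 := by
    have := hfw 0 h0mem
    simpa using this
  set q : V → ℝ := fun x => f (Pi.single x 1) with hqdef
  have hqnonneg : ∀ x, 0 ≤ q x := by
    intro x
    by_contra hneg
    push_neg at hneg
    have ht : (0:ℝ) < (w - 1) / q x := div_pos_of_neg_of_neg (by linarith) hneg
    have hmem : (((w - 1) / q x) • (Pi.single x 1 : V → ℝ)) ∈ Ω := by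
      intro i _
      simp only [Pi.smul_apply, smul_eq_mul, Set.mem_Ici, Pi.single_apply]
      by_cases h : i = x
      · rw [if_pos h, mul_one]; exact le_of_lt ht
      · simp [h]
    have h2 := hfw _ hmem
    rw [map_smul, smul_eq_mul] at h2
    have h3 : w < (w - 1) / q x * q x := h2
    rw [div_mul_cancel₀ _ (ne_of_lt hneg)] at h3
    linarith
  have hrep : ∀ y : V → ℝ, f y = ∑ x : V, y x * q x := by
    intro y
    have hy : y = ∑ x : V, y x • (Pi.single x 1 : V → ℝ) := by
      funext j
      simp only [Finset.sum_apply, Pi.smul_apply, smul_eq_mul]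
      rw [Finset.sum_eq_single j]
      · simp
      · intro b _ hbj; simp [Pi.single_apply, Ne.symm hbj]
      · intro h; exact absurd (Finset.mem_univ j) h
    conv_lhs => rw [hy]
    rw [map_sum]
    congr 1; funext x
    rw [map_smul, smul_eq_mul]
  -- the key strict inequalities
  set W : ℝ := ∑ x : V, q x with hW
  have hkey : ∀ x : V, q x + (∑ v ∈ univ.filter (fun v => E x v), q v) < c * W := by
    intro x
    have hmem : Pi.single x (1:ℝ) ∈ stdSimplex ℝ V := single_mem_stdSimplex ℝ x
    have hlt : f (Amap E c (Pi.single x 1)) < u := hfu _ ⟨_, hmem, rfl⟩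
    have hsum1 : ∑ y : V, Pi.single x (1:ℝ) y = 1 := by
      simp [Pi.single_apply]
    have hcomp : ∀ v, Amap E c (Pi.single x 1) v
        = (if v = x then (1:ℝ) else 0) + (if E x v then 1 else 0) - c := by
      intro v
      rw [Amap_apply, hsum1, mul_one]
      congr 2
      · simp [Pi.single_apply]
      · rw [Finset.sum_filter]
        rw [Finset.sum_eq_single x]
        · simp [Pi.single_apply]
        · intro b _ hbx
          simp [Pi.single_apply, Ne.symm hbx]
        · intro h; exact absurd (Finset.mem_univ x) h
    have hfA : f (Amap E c (Pi.single x 1))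
        = q x + (∑ v ∈ univ.filter (fun v => E x v), q v) - c * W := by
      rw [hrep]
      simp only [hcomp]
      have : ∀ v : V, ((if v = x then (1:ℝ) else 0) + (if E x v then 1 else 0) - c) * q v
          = (if v = x then q v else 0) + (if E x v then q v else 0) - c * q v := by
        intro v
        split_ifs <;> ring
      rw [Finset.sum_congr rfl (fun v _ => this v)]
      rw [Finset.sum_sub_distrib, Finset.sum_add_distrib]
      rw [Finset.sum_ite_eq' univ x q]
      rw [← Finset.sum_filter, ← Finset.mul_sum]
      simp
      exact Or.inl hW.symm
    have : f (Amap E c (Pi.single x 1)) < 0 := lt_trans hlt (lt_trans huw hw0)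
    rw [hfA] at this
    linarith
  have hWpos : 0 < W := by
    by_contra hWle
    push_neg at hWle
    have hW0 : W = 0 := le_antisymm hWle (Finset.sum_nonneg (fun x _ => hqnonneg x))
    have hq0 : ∀ x, q x = 0 := by
      intro x
      have := Finset.sum_eq_zero_iff_of_nonneg (fun x _ => hqnonneg x) |>.mp hW0
      exact this x (Finset.mem_univ x)
    have hf0 : ∀ y, f y = 0 := by
      intro y; rw [hrep]; simp [hq0]
    obtain ⟨x⟩ := ‹Nonempty V›
    have := hfu (Amap E c (Pi.single x 1)) ⟨_, single_mem_stdSimplex ℝ x, rfl⟩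
    rw [hf0] at this
    linarith
  -- greedy
  obtain ⟨S, hSsub, hSind, hSsum⟩ := greedy_indep E hirr hsimple q hqnonneg Finset.univ
  rcases Finset.eq_empty_or_nonempty S with rfl | hSne
  · simp at hSsum
    linarith
  · have hstrict : ∑ s ∈ S, 2 * (q s + ∑ x ∈ univ.filter (fun x => E s x), q x)
        < ∑ s ∈ S, 2 * (c * W) := by
      apply Finset.sum_lt_sum_of_nonempty hSne
      intro s _
      have := hkey s
      linarith
    have hcard : (S.card : ℝ) ≤ (a : ℝ) := by exact_mod_cast hub S hSind
    have h2cW : 0 < 2 * (c * W) := by positivity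
    have : W < (a : ℝ) * (2 * (c * W)) := by
      calc W ≤ ∑ s ∈ S, 2 * (q s + ∑ x ∈ univ.filter (fun x => E s x), q x) := hSsum
        _ < ∑ s ∈ S, 2 * (c * W) := hstrict
        _ = (S.card : ℝ) * (2 * (c * W)) := by rw [Finset.sum_const, nsmul_eq_mul]
        _ ≤ (a : ℝ) * (2 * (c * W)) := by
            apply mul_le_mul_of_nonneg_right hcard (le_of_lt h2cW)
    have hane : (a : ℝ) ≠ 0 := by exact_mod_cast ha0.ne'
    rw [hc] at this
    have : W < W := by
      have h : (a : ℝ) * (2 * (1 / (2 * a) * W)) = W := by field_simp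
      linarith [h ▸ this]
    exact absurd this (lt_irrefl W)
/-- Every finite simple loopless digraph `G` has a fractional dominating function `g`
with total weight at most `2·α(G)`: i.e. `γ*(G) ≤ 2·α(G)`. -/
theorem fractional_domination_le_two_mul_indepNum
    {V : Type*} [Fintype V] (E : V → V → Prop)
    (hirr : Irreflexive E) (hsimple : ∀ u v, E u v → ¬ E v u)
    (a : ℕ)
    (ha : IsGreatest {n : ℕ | ∃ S : Finset V,
        (∀ u ∈ S, ∀ w ∈ S, u ≠ w → ¬ E u w) ∧ S.card = n} a) :
    ∃ g : V → ℝ,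
      (∀ v, 0 ≤ g v ∧ g v ≤ 1) ∧
      (∀ v, 1 ≤ g v + ∑ x ∈ univ.filter (fun x => E x v), g x) ∧
      ∑ v, g v ≤ 2 * a := by
  rcases isEmpty_or_nonempty V with hV | hV
  · refine ⟨fun _ => 0, fun v => isEmptyElim v, fun v => isEmptyElim v, ?_⟩
    simp
  · -- a ≥ 1
    have ha0 : 0 < a := by
      have h1 : 1 ∈ {n : ℕ | ∃ S : Finset V,
          (∀ u ∈ S, ∀ w ∈ S, u ≠ w → ¬ E u w) ∧ S.card = n} := by
        refine ⟨{Classical.arbitrary V}, ?_, Finset.card_singleton _⟩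
        intro u hu w hw huw
        rw [Finset.mem_singleton] at hu hw
        exact absurd (hu.trans hw.symm) huw
      exact lt_of_lt_of_le Nat.zero_lt_one (ha.2 h1)
    have hub : ∀ S : Finset V, (∀ u ∈ S, ∀ w ∈ S, u ≠ w → ¬ E u w) → S.card ≤ a :=
      fun S hS => ha.2 ⟨S, hS, rfl⟩
    obtain ⟨p, hp0, hp1, hpdom⟩ := exists_p E hirr hsimple a ha0 hub
    have h2a : (0:ℝ) < 2 * a := by positivity
    refine ⟨fun v => min (2 * a * p v) 1, ?_, ?_, ?_⟩
    · intro v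
      constructor
      · exact le_min (mul_nonneg h2a.le (hp0 v)) zero_le_one
      · exact min_le_right _ _
    · intro v
      have hvns : v ∉ univ.filter (fun x => E x v) := by
        simp [hirr v]
      by_cases hcap : ∃ x ∈ insert v (univ.filter (fun x => E x v)), 1 ≤ 2 * a * p x
      · obtain ⟨x, hx, h1x⟩ := hcap
        have : (1:ℝ) ≤ ∑ y ∈ insert v (univ.filter (fun x => E x v)),
            min (2 * a * p y) 1 := by
          have hterm : min (2 * a * p x) 1 = 1 := min_eq_right h1x
          calc (1:ℝ) = min (2 * a * p x) 1 := hterm.symm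
            _ ≤ _ := Finset.single_le_sum
                (f := fun y => min (2 * (a:ℝ) * p y) 1)
                (fun y _ => le_min (mul_nonneg h2a.le (hp0 y)) zero_le_one) hx
        rwa [Finset.sum_insert hvns] at this
      · push_neg at hcap
        have heq : ∀ x ∈ insert v (univ.filter (fun x => E x v)),
            min (2 * a * p x) 1 = 2 * a * p x :=
          fun x hx => min_eq_left (le_of_lt (hcap x hx))
        have : ∑ y ∈ insert v (univ.filter (fun x => E x v)), min (2 * a * p y) 1
            = 2 * a * (p v + ∑ x ∈ univ.filter (fun x => E x v), p x) := by
          rw [Finset.sum_congr rfl heq, Finset.sum_insert hvns, mul_add, Finset.mul_sum]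
        have hge : 1 ≤ 2 * a * (p v + ∑ x ∈ univ.filter (fun x => E x v), p x) := by
          have := hpdom v
          calc (1:ℝ) = 2 * a * (1 / (2 * a)) := by field_simp
            _ ≤ 2 * a * (p v + ∑ x ∈ univ.filter (fun x => E x v), p x) :=
                mul_le_mul_of_nonneg_left this (le_of_lt h2a)
        rw [Finset.sum_insert hvns] at this
        show (1:ℝ) ≤ min (2 * a * p v) 1 + ∑ x ∈ univ.filter (fun x => E x v), min (2 * a * p x) 1
        rw [this]
        exact hge
    · calc ∑ v, min (2 * a * p v) 1 ≤ ∑ v, 2 * a * p v :=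
          Finset.sum_le_sum (fun v _ => min_le_left _ _)
        _ = 2 * a * ∑ v, p v := by rw [Finset.mul_sum]
        _ = 2 * a := by rw [hp1, mul_one]
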